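/- arXiv:2605.21656 — 7 statements merged into one kernel-verified Lean document; each statement's English description precedes it below -/
import Mathlib

section
/- If β·(α+γ) < 4, then the logit map L_t is a contraction on [0,1] with Lipschitz constant β·(α+γ)/4 < 1; that is, |L_t(p) − L_t(q)| ≤ (β·(α+γ)/4)·|p − q| for all p, q ∈ [0,1]. Consequently L_t has a unique fixed point in [0,1]. -/
/-- The logit map with status-quo bias: `L_t(p) = 1/(1 + exp(β(α − κ − p(α+γ) + t)))`. -/
noncomputable def logitMap (α γ κ β t p : ℝ) : ℝ :=
  1 / (1 + Real.exp (β * (α - κ - p * (α + γ) + t)))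

lemma sigmoid_lipschitz (a b : ℝ) :
    |1 / (1 + Real.exp a) - 1 / (1 + Real.exp b)| ≤ (1/4) * |a - b| := by
  have key : ∀ x : ℝ, HasDerivAt (fun y => (1 + Real.exp y)⁻¹)
      (-(Real.exp x) / (1 + Real.exp x) ^ 2) x := by
    intro x
    have h1 : HasDerivAt (fun y => 1 + Real.exp y) (Real.exp x) x := by
      simpa using (Real.hasDerivAt_exp x).const_add 1
    have hne : (1 + Real.exp x) ≠ 0 := by positivity
    exact h1.inv hne
  have hbound : ∀ x : ℝ, ‖-(Real.exp x) / (1 + Real.exp x) ^ 2‖ ≤ (1/4 : ℝ) := by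
    intro x
    have he : 0 < Real.exp x := Real.exp_pos x
    rw [Real.norm_eq_abs, abs_div, abs_neg, abs_of_pos he, abs_of_pos (by positivity)]
    rw [div_le_iff₀ (by positivity)]
    nlinarith [sq_nonneg (1 - Real.exp x)]
  have := Convex.norm_image_sub_le_of_norm_hasDerivWithin_le
    (f := fun y => (1 + Real.exp y)⁻¹)
    (f' := fun x => -(Real.exp x) / (1 + Real.exp x) ^ 2) (C := 1/4)
    (fun x _ => (key x).hasDerivWithinAt) (fun x _ => hbound x)
    (convex_univ) (Set.mem_univ b) (Set.mem_univ a)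
  simpa [Real.norm_eq_abs, one_div] using this

/-- If `β(α+γ) < 4`, then `L_t` is a contraction on `[0,1]` with Lipschitz constant
`β(α+γ)/4 < 1`, and consequently has a unique fixed point in `[0,1]`. -/
theorem stmt_1 (α γ κ β t : ℝ) (hα : 0 < α) (hγ : 0 < γ) (hκ : 0 ≤ κ) (hβ : 0 < β)
    (hcontr : β * (α + γ) < 4) :
    β * (α + γ) / 4 < 1 ∧
    (∀ p ∈ Set.Icc (0 : ℝ) 1, ∀ q ∈ Set.Icc (0 : ℝ) 1,
      |logitMap α γ κ β t p - logitMap α γ κ β t q| ≤ β * (α + γ) / 4 * |p - q|) ∧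
    (∃! p, p ∈ Set.Icc (0 : ℝ) 1 ∧ logitMap α γ κ β t p = p) := by
  have hk : 0 < β * (α + γ) := by positivity
  have hlt : β * (α + γ) / 4 < 1 := by linarith
  have hlip : ∀ p q : ℝ,
      |logitMap α γ κ β t p - logitMap α γ κ β t q| ≤ β * (α + γ) / 4 * |p - q| := by
    intro p q
    have := sigmoid_lipschitz (β * (α - κ - p * (α + γ) + t)) (β * (α - κ - q * (α + γ) + t))
    have harg : β * (α - κ - p * (α + γ) + t) - β * (α - κ - q * (α + γ) + t)
        = β * (α + γ) * (q - p) := by ring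
    rw [harg] at this
    unfold logitMap
    calc |1 / (1 + Real.exp (β * (α - κ - p * (α + γ) + t))) -
          1 / (1 + Real.exp (β * (α - κ - q * (α + γ) + t)))|
        ≤ (1/4) * |β * (α + γ) * (q - p)| := this
      _ = β * (α + γ) / 4 * |p - q| := by
          rw [abs_mul, abs_of_pos hk, ← abs_neg (q - p)]
          ring_nf
  refine ⟨hlt, fun p _ q _ => hlip p q, ?_⟩
  -- existence via IVT
  have hcont : ContinuousOn (fun p => logitMap α γ κ β t p - p) (Set.Icc 0 1) := by
    apply ContinuousOn.sub _ continuousOn_id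
    apply Continuous.continuousOn
    unfold logitMap
    apply Continuous.div continuous_const
    · continuity
    · intro x; positivity
  have h0 : (0:ℝ) ≤ logitMap α γ κ β t 0 - 0 := by
    simp only [sub_zero]; unfold logitMap; positivity
  have h1 : logitMap α γ κ β t 1 - 1 ≤ 0 := by
    unfold logitMap
    have he : 0 < Real.exp (β * (α - κ - 1 * (α + γ) + t)) := Real.exp_pos _
    rw [sub_nonpos, div_le_one (by positivity)]
    linarith
  have := intermediate_value_Icc' (by norm_num : (0:ℝ) ≤ 1) hcont
  obtain ⟨p, hp, hfp⟩ := this ⟨h1, h0⟩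
  refine ⟨p, ⟨hp, by linarith [sub_eq_zero.mp hfp]⟩, ?_⟩
  rintro q ⟨hq, hfq⟩
  have hfp' : logitMap α γ κ β t p = p := by linarith [sub_eq_zero.mp hfp]
  have := hlip q p
  rw [hfq, hfp'] at this
  by_contra hne
  have habs : 0 < |q - p| := abs_pos.mpr (sub_ne_zero.mpr hne)
  nlinarith
end

section
/- Assume β·(α+γ) < 4, and for each tax t ∈ ℝ let p_t denote the unique fixed point in [0,1] of the logit map with parameters (α, γ, κ, β, t). Then p_t is strictly decreasing in t: if t₁ < t₂ then p_{t₁} > p_{t₂}. -/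
/-- Under the contraction condition `β(α+γ) < 4`, the QRE-SB equilibrium probability
`p_t` (the unique fixed point of the logit map in `[0,1]`) is strictly decreasing
in the tax `t`: if `t₁ < t₂` then `p_{t₁} > p_{t₂}`. -/
theorem stmt_3 (α γ κ β : ℝ) (hα : 0 < α) (hγ : 0 < γ) (hκ : 0 ≤ κ) (hβ : 0 < β)
    (hcontr : β * (α + γ) < 4)
    (t₁ t₂ p₁ p₂ : ℝ) (ht : t₁ < t₂)
    (hp₁ : p₁ ∈ Set.Icc (0 : ℝ) 1) (hfix₁ : logitMap α γ κ β t₁ p₁ = p₁)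
    (hp₂ : p₂ ∈ Set.Icc (0 : ℝ) 1) (hfix₂ : logitMap α γ κ β t₂ p₂ = p₂) :
    p₂ < p₁ := by
  have hsum : 0 < α + γ := by linarith
  -- L_{t₁}(p₂) > L_{t₂}(p₂) = p₂
  have hmono : logitMap α γ κ β t₂ p₂ < logitMap α γ κ β t₁ p₂ := by
    unfold logitMap
    apply one_div_lt_one_div_of_lt
    · positivity
    · have := Real.exp_lt_exp.mpr (show β * (α - κ - p₂ * (α + γ) + t₁) <
        β * (α - κ - p₂ * (α + γ) + t₂) by nlinarith)
      linarith
  -- the function g(p) = L_{t₁}(p) - p is strictly antitone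
  have hanti : StrictAnti (fun p => logitMap α γ κ β t₁ p - p) := by
    apply strictAnti_of_deriv_neg
    intro p
    set u := β * (α - κ - p * (α + γ) + t₁) with hu
    have hE : 0 < Real.exp u := Real.exp_pos u
    have hinner : HasDerivAt (fun q : ℝ => β * (α - κ - q * (α + γ) + t₁))
        (β * (-(α + γ))) p := by
      have h1 : HasDerivAt (fun q : ℝ => q * (α + γ)) (α + γ) p := by
        simpa using (hasDerivAt_id p).mul_const (α + γ)
      have h2 := (((hasDerivAt_const p (α - κ)).sub h1).add_const t₁).const_mul β
      simpa using h2
    have hExp : HasDerivAt (fun q : ℝ => Real.exp (β * (α - κ - q * (α + γ) + t₁)))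
        (Real.exp u * (β * (-(α + γ)))) p := hinner.exp
    have hDen : HasDerivAt (fun q : ℝ => 1 + Real.exp (β * (α - κ - q * (α + γ) + t₁)))
        (Real.exp u * (β * (-(α + γ)))) p := by
      exact hExp.const_add 1
    have hne : (1 + Real.exp u) ≠ 0 := by positivity
    have hdiv : HasDerivAt (fun q : ℝ => logitMap α γ κ β t₁ q)
        ((0 * (1 + Real.exp u) - 1 * (Real.exp u * (β * (-(α + γ))))) / (1 + Real.exp u) ^ 2)
        p := by
      unfold logitMap
      exact (hasDerivAt_const p 1).div hDen hne
    have hg : HasDerivAt (fun q => logitMap α γ κ β t₁ q - q)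
        ((0 * (1 + Real.exp u) - 1 * (Real.exp u * (β * (-(α + γ))))) / (1 + Real.exp u) ^ 2 - 1)
        p := hdiv.sub (hasDerivAt_id p)
    rw [hg.deriv]
    rw [sub_neg, div_lt_one (by positivity)]
    nlinarith [sq_nonneg (1 - Real.exp u), mul_pos hβ hsum,
      mul_pos (mul_pos hβ hsum) hE]
  by_contra h
  push_neg at h
  rcases lt_or_eq_of_le h with h' | h'
  · have := hanti h'
    simp only at this
    rw [hfix₁] at this
    rw [hfix₂] at hmono
    linarith
  · rw [h'] at hfix₁
    rw [hfix₂] at hmono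
    linarith [hfix₁ ▸ hmono]
end

section
/- Fix γ > 0, κ ≥ 0, β > 0 and t ∈ ℝ. For each α > 0 with β·(α+γ) < 4, let p*(α) denote the unique fixed point in [0,1] of the logit map with parameters (α, γ, κ, β, t). Then p* is strictly decreasing in α: if 0 < α₁ < α₂ and β·(α₂+γ) < 4, then p*(α₁) > p*(α₂). -/
private lemma logit_deriv (α γ κ β t : ℝ) (p : ℝ) :
    HasDerivAt (fun p => logitMap α γ κ β t p)
      (β * (α + γ) * Real.exp (β * (α - κ - p * (α + γ) + t)) /
        (1 + Real.exp (β * (α - κ - p * (α + γ) + t))) ^ 2) p := by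
  have hu : HasDerivAt (fun p : ℝ => β * (α - κ - p * (α + γ) + t)) (β * (-(α + γ))) p := by
    have h1 : HasDerivAt (fun p : ℝ => p * (α + γ)) (α + γ) p := by
      simpa using (hasDerivAt_id p).mul_const (α + γ)
    have h2 : HasDerivAt (fun p : ℝ => α - κ - p * (α + γ) + t) (-(α + γ)) p := by
      simpa using ((hasDerivAt_const p (α - κ)).sub h1).add_const t
    simpa using h2.const_mul β
  have he := hu.exp
  have hne : (1 : ℝ) + Real.exp (β * (α - κ - p * (α + γ) + t)) ≠ 0 := by
    positivity
  have hd := ((hasDerivAt_const p (1 : ℝ)).add he).inv hne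
  have : HasDerivAt (fun p => logitMap α γ κ β t p)
      (-(0 + Real.exp (β * (α - κ - p * (α + γ) + t)) * (β * (-(α + γ)))) /
        (1 + Real.exp (β * (α - κ - p * (α + γ) + t))) ^ 2) p := by
    simpa [logitMap, one_div, Pi.add_def, Pi.inv_def] using hd
  convert this using 1
  ring

/-- Under the contraction condition, the QRE-SB equilibrium probability `p*(α)`
(the unique fixed point of the logit map in `[0,1]`) is strictly decreasing in `α`:
if `0 < α₁ < α₂` and `β(α₂+γ) < 4`, then `p*(α₁) > p*(α₂)`. -/
theorem stmt_4 (γ κ β t : ℝ) (hγ : 0 < γ) (hκ : 0 ≤ κ) (hβ : 0 < β)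
    (α₁ α₂ p₁ p₂ : ℝ) (hα₁ : 0 < α₁) (hα : α₁ < α₂)
    (hcontr : β * (α₂ + γ) < 4)
    (hp₁ : p₁ ∈ Set.Icc (0 : ℝ) 1) (hfix₁ : logitMap α₁ γ κ β t p₁ = p₁)
    (hp₂ : p₂ ∈ Set.Icc (0 : ℝ) 1) (hfix₂ : logitMap α₂ γ κ β t p₂ = p₂) :
    p₂ < p₁ := by
  have hexp2 := Real.exp_pos (β * (α₂ - κ - p₂ * (α₂ + γ) + t))
  have hp2lt1 : p₂ < 1 := by
    rw [← hfix₂]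
    unfold logitMap
    rw [div_lt_one (by positivity)]
    linarith
  -- strict monotonicity in α at p₂
  have key : p₂ < logitMap α₁ γ κ β t p₂ := by
    have hlg : logitMap α₂ γ κ β t p₂ < logitMap α₁ γ κ β t p₂ := by
      unfold logitMap
      apply div_lt_div_of_pos_left one_pos (by positivity)
      have harg : β * (α₁ - κ - p₂ * (α₁ + γ) + t) < β * (α₂ - κ - p₂ * (α₂ + γ) + t) := by
        have : (α₂ - α₁) * (1 - p₂) > 0 := by nlinarith
        nlinarith
      have := Real.exp_lt_exp.2 harg
      linarith
    rwa [hfix₂] at hlg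
  by_contra h
  push_neg at h
  rcases eq_or_lt_of_le h with heq | hlt
  · rw [heq] at hfix₁; linarith [key, hfix₁]
  -- MVT on [p₁, p₂]
  set F := fun p => logitMap α₁ γ κ β t p with hF
  set F' := fun p => β * (α₁ + γ) * Real.exp (β * (α₁ - κ - p * (α₁ + γ) + t)) /
        (1 + Real.exp (β * (α₁ - κ - p * (α₁ + γ) + t))) ^ 2 with hF'
  have hderiv : ∀ x ∈ Set.Ioo p₁ p₂, HasDerivAt F (F' x) x :=
    fun x _ => logit_deriv α₁ γ κ β t x
  have hcont : ContinuousOn F (Set.Icc p₁ p₂) :=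
    fun x _ => (logit_deriv α₁ γ κ β t x).continuousAt.continuousWithinAt
  obtain ⟨c, _, hc⟩ := exists_hasDerivAt_eq_slope F F' hlt hcont hderiv
  have hbound : F' c < 1 := by
    have he := Real.exp_pos (β * (α₁ - κ - c * (α₁ + γ) + t))
    set e := Real.exp (β * (α₁ - κ - c * (α₁ + γ) + t)) with hedef
    have hratio : e / (1 + e) ^ 2 ≤ 1 / 4 := by
      rw [div_le_div_iff₀ (by positivity) (by norm_num)]
      nlinarith [sq_nonneg (1 - e)]
    have hk : β * (α₁ + γ) < 4 := by nlinarith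
    have hkpos : 0 < β * (α₁ + γ) := by positivity
    calc F' c = β * (α₁ + γ) * (e / (1 + e) ^ 2) := by rw [hF']; ring
      _ ≤ β * (α₁ + γ) * (1 / 4) := by
          exact mul_le_mul_of_nonneg_left hratio (le_of_lt hkpos)
      _ < 1 := by linarith
  have hslope : (F p₂ - F p₁) / (p₂ - p₁) < 1 := hc ▸ hbound
  have : F p₂ - F p₁ < p₂ - p₁ := by
    rw [div_lt_one (by linarith)] at hslope; linarith
  have hFp₁ : F p₁ = p₁ := hfix₁
  have : F p₂ < p₂ := by linarith
  exact absurd key (by simpa [hF] using this.not_gt)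
end

section
/- Fix α > 0, κ ≥ 0, β > 0 and t ∈ ℝ. For each γ > 0 with β·(α+γ) < 4, let p*(γ) denote the unique fixed point in [0,1] of the logit map with parameters (α, γ, κ, β, t). Then p* is strictly increasing in γ: if 0 < γ₁ < γ₂ and β·(α+γ₂) < 4, then p*(γ₁) < p*(γ₂). -/
lemma logit_hasDerivAt (α γ κ β t x : ℝ) :
    HasDerivAt (logitMap α γ κ β t)
      (β * (α + γ) * Real.exp (β * (α - κ - x * (α + γ) + t)) /
        (1 + Real.exp (β * (α - κ - x * (α + γ) + t))) ^ 2) x := by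
  have hE : HasDerivAt (fun p : ℝ => β * (α - κ - p * (α + γ) + t)) (β * (-(α + γ))) x := by
    have h0 : HasDerivAt (fun p : ℝ => α - κ - p * (α + γ) + t) (-(α + γ)) x := by
      simpa using (((hasDerivAt_id x).mul_const (α + γ)).const_sub (α - κ)).add_const t
    simpa using h0.const_mul β
  have hexp := hE.exp
  have h1 : HasDerivAt (fun p : ℝ => 1 + Real.exp (β * (α - κ - p * (α + γ) + t)))
      (Real.exp (β * (α - κ - x * (α + γ) + t)) * (β * (-(α + γ)))) x := hexp.const_add 1
  have hne : (1 : ℝ) + Real.exp (β * (α - κ - x * (α + γ) + t)) ≠ 0 := by positivity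
  have := h1.inv hne
  have heq : (logitMap α γ κ β t) =
      fun p : ℝ => (1 + Real.exp (β * (α - κ - p * (α + γ) + t)))⁻¹ := by
    funext p; simp [logitMap, one_div]
  rw [heq]
  refine this.congr_deriv ?_
  ring

/-- Under the contraction condition, the QRE-SB equilibrium probability `p*(γ)`
(the unique fixed point of the logit map in `[0,1]`) is strictly increasing in `γ`:
if `0 < γ₁ < γ₂` and `β(α+γ₂) < 4`, then `p*(γ₁) < p*(γ₂)`. -/
theorem stmt_5 (α κ β t : ℝ) (hα : 0 < α) (hκ : 0 ≤ κ) (hβ : 0 < β)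
    (γ₁ γ₂ p₁ p₂ : ℝ) (hγ₁ : 0 < γ₁) (hγ : γ₁ < γ₂)
    (hcontr : β * (α + γ₂) < 4)
    (hp₁ : p₁ ∈ Set.Icc (0 : ℝ) 1) (hfix₁ : logitMap α γ₁ κ β t p₁ = p₁)
    (hp₂ : p₂ ∈ Set.Icc (0 : ℝ) 1) (hfix₂ : logitMap α γ₂ κ β t p₂ = p₂) :
    p₁ < p₂ := by
  have hpos : 0 < p₁ := by
    rw [← hfix₁]; unfold logitMap; positivity
  have hlt : p₁ < logitMap α γ₂ κ β t p₁ := by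
    conv_lhs => rw [← hfix₁]
    unfold logitMap
    apply one_div_lt_one_div_of_lt
    · positivity
    · have h1 : β * (α - κ - p₁ * (α + γ₂) + t) < β * (α - κ - p₁ * (α + γ₁) + t) := by
        apply mul_lt_mul_of_pos_left _ hβ
        nlinarith
      have := Real.exp_lt_exp.mpr h1
      linarith
  by_contra hcon
  push_neg at hcon
  rcases eq_or_lt_of_le hcon with heq | hlt2
  · rw [← heq, hfix₂] at hlt
    exact lt_irrefl _ hlt
  · -- p₂ < p₁ : MVT
    set f' : ℝ → ℝ := fun x => β * (α + γ₂) * Real.exp (β * (α - κ - x * (α + γ₂) + t)) /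
        (1 + Real.exp (β * (α - κ - x * (α + γ₂) + t))) ^ 2 with hf'
    have hcont : ContinuousOn (logitMap α γ₂ κ β t) (Set.Icc p₂ p₁) :=
      fun x _ => ((logit_hasDerivAt α γ₂ κ β t x).differentiableAt.continuousAt).continuousWithinAt
    have hderiv : ∀ x ∈ Set.Ioo p₂ p₁, HasDerivAt (logitMap α γ₂ κ β t) (f' x) x :=
      fun x _ => logit_hasDerivAt α γ₂ κ β t x
    obtain ⟨c, _, hc⟩ := exists_hasDerivAt_eq_slope (logitMap α γ₂ κ β t) f' hlt2 hcont hderiv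
    have hbound : f' c < 1 := by
      rw [hf']
      set e := Real.exp (β * (α - κ - c * (α + γ₂) + t)) with he
      have hepos : 0 < e := Real.exp_pos _
      rw [div_lt_one (by positivity)]
      nlinarith [sq_nonneg (1 - e), sq_nonneg e]
    rw [hfix₂] at hc
    have hdiff : logitMap α γ₂ κ β t p₁ - p₂ = f' c * (p₁ - p₂) := by
      exact (div_eq_iff (sub_ne_zero.mpr (ne_of_gt hlt2))).mp hc.symm
    nlinarith [hlt, hdiff, hbound]
end

section
/- Assume β·(α+γ) < 4 and for each t ∈ ℝ let p_t denote the unique fixed point in [0,1] of the logit map L_t. Then p_t → 0 as t → +∞, yet p_t > 0 for every finite t. Hence arbitrarily high taxes approximate the effect of deleting the status-quo action but never achieve it exactly; equivalently, the infimum of p_t over all t ∈ ℝ is 0 but is not attained. -/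
open Filter

/-- Approximation without replication: under the contraction condition, the unique
QRE-SB equilibrium probability `p_t` tends to `0` as `t → +∞`, yet `p_t > 0` for every
finite `t`; equivalently, the infimum of `p_t` over all `t ∈ ℝ` is `0` but not attained. -/
theorem stmt_8 (α γ κ β : ℝ) (hα : 0 < α) (hγ : 0 < γ) (hκ : 0 ≤ κ) (hβ : 0 < β)
    (hcontr : β * (α + γ) < 4)
    (p : ℝ → ℝ) (hmem : ∀ t, p t ∈ Set.Icc (0 : ℝ) 1)
    (hfix : ∀ t, logitMap α γ κ β t (p t) = p t) :
    Tendsto p atTop (nhds 0) ∧ (∀ t, 0 < p t) ∧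
    sInf (Set.range p) = 0 ∧ (0 : ℝ) ∉ Set.range p := by
  have hpos : ∀ t, 0 < p t := by
    intro t
    rw [← hfix t, logitMap]
    positivity
  -- upper bound
  have hub : ∀ t, p t ≤ 1 / (1 + Real.exp (β * (t - κ - γ))) := by
    intro t
    rw [← hfix t, logitMap]
    apply one_div_le_one_div_of_le
    · positivity
    · have h1 : β * (t - κ - γ) ≤ β * (α - κ - p t * (α + γ) + t) := by
        apply mul_le_mul_of_nonneg_left _ hβ.le
        have := (hmem t).2
        nlinarith [hα.le, hγ.le]
      have := Real.exp_le_exp.mpr h1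
      linarith
  have htend : Tendsto p atTop (nhds 0) := by
    have hbig : Tendsto (fun t => 1 + Real.exp (β * (t - κ - γ))) atTop atTop := by
      apply tendsto_atTop_add_const_left
      apply Real.tendsto_exp_atTop.comp
      apply Tendsto.const_mul_atTop hβ
      exact tendsto_atTop_add_const_right _ _ (tendsto_atTop_add_const_right _ _ tendsto_id)
    have h0 : Tendsto (fun t => 1 / (1 + Real.exp (β * (t - κ - γ)))) atTop (nhds 0) := by
      simpa [one_div, Pi.inv_def] using hbig.inv_tendsto_atTop
    exact squeeze_zero (fun t => (hpos t).le) hub h0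
  refine ⟨htend, hpos, ?_, ?_⟩
  · have hbdd : BddBelow (Set.range p) := ⟨0, by rintro x ⟨t, rfl⟩; exact (hpos t).le⟩
    have hge : 0 ≤ sInf (Set.range p) :=
      le_csInf (Set.range_nonempty p) (by rintro x ⟨t, rfl⟩; exact (hpos t).le)
    have hle : sInf (Set.range p) ≤ 0 := by
      by_contra h
      push_neg at h
      have := htend.eventually (eventually_lt_nhds h)
      obtain ⟨t, ht⟩ := this.exists
      exact absurd (csInf_le hbdd ⟨t, rfl⟩) (not_le.mpr ht)
    linarith
  · rintro ⟨t, ht⟩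
    exact absurd ht.symm (ne_of_gt (hpos t)).symm
end

section
/- Assume β·(α+γ) < 4, let p_t denote the unique fixed point in [0,1] of the logit map L_t, and set t̄ = κ − (α − γ)/2. If t < t̄ then p_t > 1/2, and if t > t̄ then p_t < 1/2. -/
/-- Under the contraction condition, with `t̄ = κ − (α − γ)/2` and `p_t` the unique
fixed point of `L_t` in `[0,1]`: if `t < t̄` then `p_t > 1/2`, and if `t > t̄` then
`p_t < 1/2`. -/
theorem stmt_10 (α γ κ β : ℝ) (hα : 0 < α) (hγ : 0 < γ) (hκ : 0 ≤ κ) (hβ : 0 < β)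
    (hcontr : β * (α + γ) < 4)
    (t p : ℝ) (hp : p ∈ Set.Icc (0 : ℝ) 1) (hfix : logitMap α γ κ β t p = p) :
    (t < κ - (α - γ) / 2 → 1 / 2 < p) ∧ (κ - (α - γ) / 2 < t → p < 1 / 2) := by
  set g : ℝ → ℝ := fun q => logitMap α γ κ β t q - q with hg
  have hE : ∀ q : ℝ, 0 < 1 + Real.exp (β * (α - κ - q * (α + γ) + t)) := fun q => by
    positivity
  have hD : ∀ q : ℝ, HasDerivAt g
      (β * (α + γ) * Real.exp (β * (α - κ - q * (α + γ) + t)) /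
        (1 + Real.exp (β * (α - κ - q * (α + γ) + t)))^2 - 1) q := by
    intro q
    have h0 : HasDerivAt (fun q : ℝ => α - κ - q * (α + γ) + t) (-(α + γ)) q := by
      have := ((hasDerivAt_id q).mul_const (α + γ)).const_sub (α - κ)
      simpa using this.add_const t
    have h1 : HasDerivAt (fun q : ℝ => β * (α - κ - q * (α + γ) + t)) (-(β * (α + γ))) q := by
      have := h0.const_mul β
      rw [show -(β * (α + γ)) = β * -(α + γ) by ring]
      exact this
    have h2 := h1.exp
    have h3 := (h2.const_add 1).inv (ne_of_gt (hE q))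
    have h4 : HasDerivAt (fun q : ℝ => logitMap α γ κ β t q)
        (β * (α + γ) * Real.exp (β * (α - κ - q * (α + γ) + t)) /
          (1 + Real.exp (β * (α - κ - q * (α + γ) + t)))^2) q := by
      have hf : (fun q : ℝ => logitMap α γ κ β t q) =
          (fun x => 1 + Real.exp (β * (α - κ - x * (α + γ) + t)))⁻¹ := by
        funext x; simp [logitMap, one_div]
      rw [hf, show β * (α + γ) * Real.exp (β * (α - κ - q * (α + γ) + t)) /
          (1 + Real.exp (β * (α - κ - q * (α + γ) + t)))^2 =
          -(Real.exp (β * (α - κ - q * (α + γ) + t)) * -(β * (α + γ))) /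
          (1 + Real.exp (β * (α - κ - q * (α + γ) + t)))^2 by ring]
      exact h3
    exact h4.sub (hasDerivAt_id q)
  have hneg : ∀ q : ℝ, deriv g q < 0 := by
    intro q
    rw [(hD q).deriv]
    set E := Real.exp (β * (α - κ - q * (α + γ) + t)) with hEdef
    have hEpos : 0 < E := Real.exp_pos _
    have key : β * (α + γ) * E < (1 + E)^2 := by
      have h4E : 4 * E ≤ (1 + E)^2 := by nlinarith [sq_nonneg (1 - E)]
      nlinarith
    have h5 : β * (α + γ) * E / (1 + E)^2 < 1 := (div_lt_one (by positivity)).mpr key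
    linarith
  have hanti : StrictAnti g := strictAnti_of_deriv_neg hneg
  have hgp : g p = 0 := by simp [hg, hfix]
  constructor
  · intro ht
    have hx : β * (α - κ - (1/2 : ℝ) * (α + γ) + t) < 0 := by nlinarith
    have hE1 : Real.exp (β * (α - κ - (1/2 : ℝ) * (α + γ) + t)) < 1 := by
      calc Real.exp (β * (α - κ - (1/2 : ℝ) * (α + γ) + t)) < Real.exp 0 :=
            Real.exp_lt_exp.mpr hx
        _ = 1 := Real.exp_zero
    have hE0 : 0 < Real.exp (β * (α - κ - (1/2 : ℝ) * (α + γ) + t)) := Real.exp_pos _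
    have hghalf : 0 < g (1/2) := by
      have : (1:ℝ)/2 < 1 / (1 + Real.exp (β * (α - κ - (1/2 : ℝ) * (α + γ) + t))) := by
        rw [div_lt_div_iff₀ (by norm_num) (by positivity)]
        linarith
      simpa [hg, logitMap] using sub_pos.mpr this
    exact hanti.lt_iff_gt.mp (by rw [hgp]; exact hghalf)
  · intro ht
    have hx : 0 < β * (α - κ - (1/2 : ℝ) * (α + γ) + t) := by nlinarith
    have hE1 : 1 < Real.exp (β * (α - κ - (1/2 : ℝ) * (α + γ) + t)) := by
      calc (1:ℝ) = Real.exp 0 := Real.exp_zero.symm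
        _ < Real.exp (β * (α - κ - (1/2 : ℝ) * (α + γ) + t)) := Real.exp_lt_exp.mpr hx
    have hE0 : 0 < Real.exp (β * (α - κ - (1/2 : ℝ) * (α + γ) + t)) := Real.exp_pos _
    have hghalf : g (1/2) < 0 := by
      have : 1 / (1 + Real.exp (β * (α - κ - (1/2 : ℝ) * (α + γ) + t))) < (1:ℝ)/2 := by
        rw [div_lt_div_iff₀ (by positivity) (by norm_num)]
        linarith
      simpa [hg, logitMap] using sub_neg.mpr this
    exact hanti.lt_iff_gt.mp (by rw [hgp]; exact hghalf)
end

section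
/- Assume β·(α+γ) < 4 and let p_t denote the unique fixed point in [0,1] of the logit map L_t. Then p_t → 1 as t → −∞. Combined with p_t → 0 as t → +∞ and strict monotonicity of t ↦ p_t, the map t ↦ p_t is a strictly decreasing bijection from ℝ onto an open subinterval of (0,1); in particular, for every target probability q strictly between these limits there is exactly one tax t with p_t = q. -/
open Filter

/-- The sigmoid `u ↦ 1/(1+exp u)` is `1/4`-Lipschitz. -/
lemma sigma_lip (a b : ℝ) :
    |1 / (1 + Real.exp a) - 1 / (1 + Real.exp b)| ≤ |a - b| / 4 := by
  have key : ∀ x y : ℝ, ‖(fun u : ℝ => 1 / (1 + Real.exp u)) y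
      - (fun u : ℝ => 1 / (1 + Real.exp u)) x‖ ≤ (1/4 : ℝ) * ‖y - x‖ := by
    intro x y
    have hd : ∀ u : ℝ, u ∈ (Set.univ : Set ℝ) →
        HasDerivWithinAt (fun u : ℝ => 1 / (1 + Real.exp u))
          (-(Real.exp u) / (1 + Real.exp u) ^ 2) Set.univ u := by
      intro u _
      have hne : (1 + Real.exp u) ≠ 0 := by positivity
      have h1 : HasDerivAt (fun u : ℝ => 1 + Real.exp u) (Real.exp u) u :=
        (Real.hasDerivAt_exp u).const_add 1
      have h2 := h1.inv hne
      simp only [one_div]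
      exact h2.hasDerivWithinAt
    have hbound : ∀ u : ℝ, u ∈ (Set.univ : Set ℝ) →
        ‖-(Real.exp u) / (1 + Real.exp u) ^ 2‖ ≤ (1/4 : ℝ) := by
      intro u _
      have he : 0 < Real.exp u := Real.exp_pos u
      rw [Real.norm_eq_abs, abs_div, abs_neg, abs_of_pos he, abs_of_pos (by positivity)]
      rw [div_le_iff₀ (by positivity)]
      nlinarith [sq_nonneg (1 - Real.exp u)]
    exact Convex.norm_image_sub_le_of_norm_hasDerivWithin_le hd hbound convex_univ
      (Set.mem_univ x) (Set.mem_univ y)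
  have := key b a
  simp only [Real.norm_eq_abs] at this
  calc |1 / (1 + Real.exp a) - 1 / (1 + Real.exp b)| ≤ (1/4 : ℝ) * |a - b| := this
    _ = |a - b| / 4 := by ring

/-- Uniqueness of the fixed point under the contraction condition. -/
lemma fix_unique (α γ κ β t x y : ℝ) (hβ : 0 < β) (hA : 0 < α + γ)
    (hcontr : β * (α + γ) < 4)
    (hx : logitMap α γ κ β t x = x) (hy : logitMap α γ κ β t y = y) : x = y := by
  by_contra hne
  have habs : 0 < |x - y| := abs_pos.2 (sub_ne_zero.2 hne)
  have h := sigma_lip (β * (α - κ - x * (α + γ) + t)) (β * (α - κ - y * (α + γ) + t))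
  rw [show β * (α - κ - x * (α + γ) + t) - β * (α - κ - y * (α + γ) + t)
      = β * (α + γ) * (y - x) by ring] at h
  rw [abs_mul, abs_of_pos (mul_pos hβ hA), abs_sub_comm y x] at h
  unfold logitMap at hx hy
  rw [hx, hy] at h
  nlinarith [mul_pos habs (show (0:ℝ) < 4 - β * (α + γ) by linarith)]

/-- Under the contraction condition, the unique QRE-SB equilibrium probability `p_t`
tends to `1` as `t → −∞` and to `0` as `t → +∞`, and `t ↦ p_t` is strictly decreasing;
hence it is a strictly decreasing bijection from `ℝ` onto an open subinterval of `(0,1)`: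
for every target probability `q` strictly between the limits `0` and `1` there is exactly
one tax `t` with `p_t = q`. -/
theorem stmt_15 (α γ κ β : ℝ) (hα : 0 < α) (hγ : 0 < γ) (hκ : 0 ≤ κ) (hβ : 0 < β)
    (hcontr : β * (α + γ) < 4)
    (p : ℝ → ℝ) (hmem : ∀ t, p t ∈ Set.Icc (0 : ℝ) 1)
    (hfix : ∀ t, logitMap α γ κ β t (p t) = p t) :
    Tendsto p atBot (nhds 1) ∧ Tendsto p atTop (nhds 0) ∧ StrictAnti p ∧
    Set.range p = Set.Ioo (0 : ℝ) 1 ∧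
    ∀ q ∈ Set.Ioo (0 : ℝ) 1, ∃! t : ℝ, p t = q := by
  have hA : 0 < α + γ := by linarith
  -- p t ∈ (0,1)
  have hP : ∀ t, 0 < p t ∧ p t < 1 := by
    intro t
    have h := hfix t
    unfold logitMap at h
    have he : 0 < Real.exp (β * (α - κ - p t * (α + γ) + t)) := Real.exp_pos _
    constructor
    · rw [← h]; positivity
    · rw [← h]
      rw [div_lt_one (by positivity)]
      linarith
  -- strict antitonicity
  have hanti : StrictAnti p := by
    intro s t hst
    have hes : β * (α - κ - p t * (α + γ) + s) < β * (α - κ - p t * (α + γ) + t) := by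
      have := hst
      nlinarith
    have hc : p t < 1 / (1 + Real.exp (β * (α - κ - p t * (α + γ) + s))) := by
      conv_lhs => rw [← hfix t]
      show logitMap α γ κ β t (p t) < _
      unfold logitMap
      apply div_lt_div_of_pos_left one_pos (by positivity)
      have := Real.exp_lt_exp.2 hes
      linarith
    have hk := sigma_lip (β * (α - κ - p s * (α + γ) + s)) (β * (α - κ - p t * (α + γ) + s))
    rw [show β * (α - κ - p s * (α + γ) + s) - β * (α - κ - p t * (α + γ) + s)
        = β * (α + γ) * (p t - p s) by ring] at hk
    rw [abs_mul, abs_of_pos (mul_pos hβ hA)] at hk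
    have hps : (1 : ℝ) / (1 + Real.exp (β * (α - κ - p s * (α + γ) + s))) = p s := hfix s
    rw [hps] at hk
    -- hk : |p s - logitMap α γ κ β s (p t)| ≤ β(α+γ)|p t - p s|/4
    by_contra hle
    push_neg at hle
    -- hle : p s ≤ p t
    have h1 : |p t - p s| = p t - p s := abs_of_nonneg (by linarith)
    have h2 : p s < 1 / (1 + Real.exp (β * (α - κ - p t * (α + γ) + s))) :=
      lt_of_le_of_lt hle hc
    have h3 : |p s - 1 / (1 + Real.exp (β * (α - κ - p t * (α + γ) + s)))|
        = 1 / (1 + Real.exp (β * (α - κ - p t * (α + γ) + s))) - p s := by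
      rw [abs_sub_comm]
      exact abs_of_pos (by linarith)
    rw [h1, h3] at hk
    nlinarith [mul_nonneg (sub_nonneg.2 hle) (show (0:ℝ) ≤ 4 - β * (α + γ) by linarith)]
  -- limit at atTop
  have htop : Tendsto p atTop (nhds 0) := by
    have hub : ∀ t, p t ≤ 1 / (1 + Real.exp (β * (α - κ - (α + γ)) + β * t)) := by
      intro t
      conv_lhs => rw [← hfix t]
      unfold logitMap
      apply div_le_div_of_nonneg_left one_pos.le (by positivity)
      have : β * (α - κ - (α + γ)) + β * t ≤ β * (α - κ - p t * (α + γ) + t) := by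
        have h1 := (hmem t).2
        nlinarith [mul_nonneg (mul_pos hβ hA).le (sub_nonneg.2 h1)]
      have := Real.exp_le_exp.2 this
      linarith
    have hg : Tendsto (fun t : ℝ => 1 / (1 + Real.exp (β * (α - κ - (α + γ)) + β * t)))
        atTop (nhds 0) := by
      simp only [one_div]
      apply Tendsto.inv_tendsto_atTop
      apply tendsto_atTop_add_const_left
      apply Real.tendsto_exp_atTop.comp
      apply tendsto_atTop_add_const_left
      exact (tendsto_id.const_mul_atTop hβ)
    exact tendsto_of_tendsto_of_tendsto_of_le_of_le tendsto_const_nhds hg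
      (fun t => (hP t).1.le) hub
  -- limit at atBot
  have hbot : Tendsto p atBot (nhds 1) := by
    have hlb : ∀ t, 1 / (1 + Real.exp (β * (α - κ) + β * t)) ≤ p t := by
      intro t
      conv_rhs => rw [← hfix t]
      unfold logitMap
      apply div_le_div_of_nonneg_left one_pos.le (by positivity)
      have : β * (α - κ - p t * (α + γ) + t) ≤ β * (α - κ) + β * t := by
        have h1 := (hmem t).1
        nlinarith [mul_nonneg (mul_pos hβ hA).le h1]
      have := Real.exp_le_exp.2 this
      linarith
    have hg : Tendsto (fun t : ℝ => 1 / (1 + Real.exp (β * (α - κ) + β * t)))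
        atBot (nhds 1) := by
      have h1 : Tendsto (fun t : ℝ => β * (α - κ) + β * t) atBot atBot := by
        apply tendsto_atBot_add_const_left
        exact (tendsto_id.const_mul_atBot hβ)
      have h2 : Tendsto (fun t : ℝ => Real.exp (β * (α - κ) + β * t)) atBot (nhds 0) :=
        Real.tendsto_exp_atBot.comp h1
      have h3 : Tendsto (fun t : ℝ => 1 + Real.exp (β * (α - κ) + β * t)) atBot (nhds 1) := by
        simpa using h2.const_add 1
      have h4 := h3.inv₀ one_ne_zero
      simpa [one_div] using h4
    exact tendsto_of_tendsto_of_tendsto_of_le_of_le hg tendsto_const_nhds hlb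
      (fun t => (hP t).2.le)
  -- surjectivity onto (0,1)
  have hsurj : ∀ q ∈ Set.Ioo (0 : ℝ) 1, ∃ t, p t = q := by
    rintro q ⟨hq0, hq1⟩
    refine ⟨Real.log ((1 - q) / q) / β - α + κ + q * (α + γ), ?_⟩
    have hfq : logitMap α γ κ β (Real.log ((1 - q) / q) / β - α + κ + q * (α + γ)) q = q := by
      unfold logitMap
      have hexp : β * (α - κ - q * (α + γ) + (Real.log ((1 - q) / q) / β - α + κ + q * (α + γ)))
          = Real.log ((1 - q) / q) := by
        field_simp
        ring
      rw [hexp, Real.exp_log (div_pos (by linarith) hq0)]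
      have hden : 1 + (1 - q) / q = 1 / q := by
        field_simp
        ring
      rw [hden, one_div_one_div]
    exact (fix_unique α γ κ β _ _ q hβ hA hcontr (hfix _) hfq)
  have hrange : Set.range p = Set.Ioo (0 : ℝ) 1 := by
    ext x
    constructor
    · rintro ⟨t, rfl⟩
      exact ⟨(hP t).1, (hP t).2⟩
    · intro hx
      exact hsurj x hx
  refine ⟨hbot, htop, hanti, hrange, ?_⟩
  intro q hq
  obtain ⟨t, ht⟩ := hsurj q hq
  exact ⟨t, ht, fun t' ht' => hanti.injective (ht'.trans ht.symm)⟩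
end
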